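/- The conditional expectation 𝔼_X^Λ maps the even subalgebra onto the even local subalgebra: for finite X ⊆ Λ ⊆ Γ, one has 𝔼_X^Λ(A) ∈ 𝔄_X⁺ for every A ∈ 𝔄_Λ⁺, and 𝔼_X^Λ(A) = A for every A ∈ 𝔄_X⁺; hence 𝔼_X^Λ(𝔄_Λ⁺) = 𝔄_X⁺. -/

import Mathlib

open scoped Classical

/-- The canonical anticommutation relations for a family `a x` of annihilation
operators in a C*-algebra. -/
def IsCAR {Γ A : Type*} [Ring A] [StarRing A] (a : Γ → A) : Prop :=
  (∀ x y, a x * a y + a y * a x = 0) ∧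
  (∀ x y, star (a x) * star (a y) + star (a y) * star (a x) = 0) ∧
  (∀ x y, a x * star (a y) + star (a y) * a x = if x = y then (1 : A) else 0)

/-- The four possible factors of a monomial at a site `x`:
`1`, `a x`, `a x *`, and `a x * a x`. -/
def carFactor {Γ A : Type*} [Ring A] [StarRing A] (a : Γ → A) (k : Fin 4) (x : Γ) : A :=
  match k with
  | 0 => 1
  | 1 => a x
  | 2 => star (a x)
  | 3 => star (a x) * a x

/-- The monomial with factor pattern `k` along the enumeration `l` of a finite set of sites. -/
def carMonomial {Γ A : Type*} [Ring A] [StarRing A] (a : Γ → A) (l : List Γ)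
    (k : Γ → Fin 4) : A :=
  (l.map fun x => carFactor a (k x) x).prod

/-- The number of odd factors (`a x` or `a x *`) of the monomial with pattern `k` along `l`. -/
def carOddCount {Γ : Type*} (l : List Γ) (k : Γ → Fin 4) : ℕ :=
  l.countP fun x => decide (k x = 1 ∨ k x = 2)

/-- `𝔄_X`: the linear span of the monomials supported in the finite set `X`. -/
def carSpan {Γ A : Type*} [Ring A] [StarRing A] [Algebra ℂ A] (a : Γ → A) (X : Finset Γ) :
    Submodule ℂ A :=
  Submodule.span ℂ {m | ∃ (l : List Γ) (k : Γ → Fin 4),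
    l.Nodup ∧ l.toFinset = X ∧ m = carMonomial a l k}

/-- `𝔄_X⁺`: the linear span of the even monomials supported in the finite set `X`. -/
def carSpanEven {Γ A : Type*} [Ring A] [StarRing A] [Algebra ℂ A] (a : Γ → A) (X : Finset Γ) :
    Submodule ℂ A :=
  Submodule.span ℂ {m | ∃ (l : List Γ) (k : Γ → Fin 4),
    l.Nodup ∧ l.toFinset = X ∧ Even (carOddCount l k) ∧ m = carMonomial a l k}

/-- The single-site unitaries `u_x^(0) = 1`, `u_x^(1) = a_x* + a_x`, `u_x^(2) = a_x* − a_x`,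
`u_x^(3) = 1 − 2 a_x* a_x`. -/
def uFactor {Γ A : Type*} [Ring A] [StarRing A] (a : Γ → A) (k : Fin 4) (x : Γ) : A :=
  match k with
  | 0 => 1
  | 1 => star (a x) + a x
  | 2 => star (a x) - a x
  | 3 => 1 - 2 * (star (a x) * a x)

/-- The unitary `u(α) = u_{x_1}^{(α(x_1))} ⋯ u_{x_n}^{(α(x_n))}` along the enumeration `l`
of `Λ ∖ X`. -/
def uProd {Γ A : Type*} [Ring A] [StarRing A] (a : Γ → A) (l : List Γ)
    (α : Fin l.length → Fin 4) : A :=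
  (List.ofFn fun i => uFactor a (α i) (l.get i)).prod

/-- The conditional expectation `𝔼_X^Λ(B) = 4^{−|Λ∖X|} ∑_{α} u(α)* B u(α)`, where `l` is
an enumeration of `Λ ∖ X`. -/
noncomputable def condExp {Γ A : Type*} [Ring A] [StarRing A] [Algebra ℂ A] (a : Γ → A)
    (l : List Γ) (B : A) : A :=
  ((4 : ℂ) ^ l.length)⁻¹ • ∑ α : Fin l.length → Fin 4, star (uProd a l α) * B * uProd a l α
section Aux
set_option linter.unusedSectionVars false
variable {Γ A : Type*} [Ring A] [StarRing A] [Algebra ℂ A] (a : Γ → A)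

lemma aa_zero (h : IsCAR a) (x : Γ) : a x * a x = 0 := by
  have h1 := h.1 x x
  have : (2:ℂ) • (a x * a x) = 0 := by rw [two_smul]; exact h1
  simpa using (smul_eq_zero.mp this).resolve_left (by norm_num)

lemma ss_zero (h : IsCAR a) (x : Γ) : star (a x) * star (a x) = 0 := by
  have h1 := h.2.1 x x
  have : (2:ℂ) • (star (a x) * star (a x)) = 0 := by rw [two_smul]; exact h1
  simpa using (smul_eq_zero.mp this).resolve_left (by norm_num)

lemma sa_one (h : IsCAR a) (x : Γ) : a x * star (a x) + star (a x) * a x = 1 := by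
  simpa using h.2.2 x x

-- cross-site anticommutation, x ≠ y
lemma cross_aa (h : IsCAR a) {x y : Γ} : a y * a x = -(a x * a y) :=
  eq_neg_of_add_eq_zero_left (by have := h.1 x y; linear_combination (norm := noncomm_ring) this)

lemma cross_ss (h : IsCAR a) {x y : Γ} :
    star (a y) * star (a x) = -(star (a x) * star (a y)) :=
  eq_neg_of_add_eq_zero_left (by have := h.2.1 x y; linear_combination (norm := noncomm_ring) this)

lemma cross_as (h : IsCAR a) {x y : Γ} (hxy : x ≠ y) :
    a y * star (a x) = -(star (a x) * a y) := by
  have := h.2.2 y x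
  rw [if_neg (Ne.symm hxy ·)] at this
  exact eq_neg_of_add_eq_zero_left this

lemma cross_sa (h : IsCAR a) {x y : Γ} (hxy : x ≠ y) :
    star (a y) * a x = -(a x * star (a y)) := by
  have := h.2.2 x y
  rw [if_neg hxy] at this
  exact eq_neg_of_add_eq_zero_left (by linear_combination (norm := noncomm_ring) this)

end Aux
section Aux2
set_option linter.unusedSectionVars false
set_option linter.unnecessarySeqFocus false
variable {Γ A : Type*} [Ring A] [StarRing A] [Algebra ℂ A] (a : Γ → A)

lemma carMonomial_append (l1 l2 : List Γ) (k : Γ → Fin 4) :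
    carMonomial a (l1 ++ l2) k = carMonomial a l1 k * carMonomial a l2 k := by
  simp [carMonomial]

lemma carMonomial_cons (x : Γ) (t : List Γ) (k : Γ → Fin 4) :
    carMonomial a (x :: t) k = carFactor a (k x) x * carMonomial a t k := by
  simp [carMonomial]

lemma carOddCount_cons (x : Γ) (t : List Γ) (k : Γ → Fin 4) :
    carOddCount (x :: t) k =
      (if (k x = 1 ∨ k x = 2) then 1 else 0) + carOddCount t k := by
  classical
  simp only [carOddCount, List.countP_cons]
  by_cases h : k x = 1 ∨ k x = 2 <;> simp [h] <;> omega

lemma carOddCount_append (l1 l2 : List Γ) (k : Γ → Fin 4) :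
    carOddCount (l1 ++ l2) k = carOddCount l1 k + carOddCount l2 k := by
  simp [carOddCount, List.countP_append]

lemma fin4_cases (j : Fin 4) : j = 0 ∨ j = 1 ∨ j = 2 ∨ j = 3 := by omega

/-- commutation of `a y` and `star (a y)` past a monomial not involving `y`. -/
lemma mono_comm (h : IsCAR a) (y : Γ) (l' : List Γ) (hy : y ∉ l') (k : Γ → Fin 4) :
    a y * carMonomial a l' k = ((-1:ℂ) ^ carOddCount l' k) • (carMonomial a l' k * a y) ∧
    star (a y) * carMonomial a l' k
      = ((-1:ℂ) ^ carOddCount l' k) • (carMonomial a l' k * star (a y)) := by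
  induction l' with
  | nil => simp [carMonomial, carOddCount]
  | cons x t ih =>
    have hxy : x ≠ y := fun hh => hy (hh ▸ List.mem_cons_self (a := x) (l := t))
    have hyt : y ∉ t := fun hh => hy (List.mem_cons_of_mem x hh)
    obtain ⟨ih1, ih2⟩ := ih hyt
    rw [carMonomial_cons, carOddCount_cons]
    set F := carFactor a (k x) x with hF
    set M := carMonomial a t k with hM
    set n := carOddCount t k with hn
    set i := (if (k x = 1 ∨ k x = 2) then 1 else 0) with hi
    have hc0 : ¬((0:Fin 4) = 1 ∨ (0:Fin 4) = 2) := by decide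
    have hc1 : ((1:Fin 4) = 1 ∨ (1:Fin 4) = 2) := by decide
    have hc2 : ((2:Fin 4) = 1 ∨ (2:Fin 4) = 2) := by decide
    have hc3 : ¬((3:Fin 4) = 1 ∨ (3:Fin 4) = 2) := by decide
    have hcomm1 : a y * F = ((-1:ℂ) ^ i) • (F * a y) := by
      rcases fin4_cases (k x) with hk | hk | hk | hk
      · simp [hF, hi, hk, carFactor, if_neg hc0]
      · simp only [hF, hi, hk, carFactor, if_pos hc1, eq_self_iff_true, true_or, or_true, if_true, pow_one, neg_smul, one_smul]
        exact cross_aa a h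
      · simp only [hF, hi, hk, carFactor, if_pos hc2, eq_self_iff_true, true_or, or_true, if_true, pow_one, neg_smul, one_smul]
        exact cross_as a h hxy
      · simp only [hF, hi, hk, carFactor, if_neg hc3, pow_zero, one_smul]
        rw [← mul_assoc, cross_as a h hxy, neg_mul, mul_assoc, cross_aa a h]
        noncomm_ring
    have hcomm2 : star (a y) * F = ((-1:ℂ) ^ i) • (F * star (a y)) := by
      rcases fin4_cases (k x) with hk | hk | hk | hk
      · simp [hF, hi, hk, carFactor, if_neg hc0]
      · simp only [hF, hi, hk, carFactor, if_pos hc1, eq_self_iff_true, true_or, or_true, if_true, pow_one, neg_smul, one_smul]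
        exact cross_sa a h hxy
      · simp only [hF, hi, hk, carFactor, if_pos hc2, eq_self_iff_true, true_or, or_true, if_true, pow_one, neg_smul, one_smul]
        exact cross_ss a h
      · simp only [hF, hi, hk, carFactor, if_neg hc3, pow_zero, one_smul]
        rw [← mul_assoc, cross_ss a h, neg_mul, mul_assoc, cross_sa a h hxy]
        noncomm_ring
    have key : ∀ z : A, z * M = ((-1:ℂ) ^ n) • (M * z) →
        z * F = ((-1:ℂ) ^ i) • (F * z) →
        z * (F * M) = ((-1:ℂ) ^ (i + n)) • (F * M * z) := by
      intro z hzM hzF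
      calc z * (F * M) = (z * F) * M := (mul_assoc _ _ _).symm
        _ = ((-1:ℂ) ^ i) • (F * (z * M)) := by rw [hzF, smul_mul_assoc, mul_assoc]
        _ = ((-1:ℂ) ^ i) • (F * (((-1:ℂ) ^ n) • (M * z))) := by rw [hzM]
        _ = ((-1:ℂ) ^ (i + n)) • (F * M * z) := by
            rw [mul_smul_comm, smul_smul, ← pow_add, mul_assoc]
    exact ⟨key _ ih1 hcomm1, key _ ih2 hcomm2⟩

/-- even monomials not involving `y` commute with `a y` and `star (a y)`. -/
lemma mono_comm_even (h : IsCAR a) (y : Γ) (l' : List Γ) (hy : y ∉ l') (k : Γ → Fin 4)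
    (he : Even (carOddCount l' k)) :
    Commute (a y) (carMonomial a l' k) ∧ Commute (star (a y)) (carMonomial a l' k) := by
  obtain ⟨h1, h2⟩ := mono_comm a h y l' hy k
  rw [he.neg_one_pow, one_smul] at h1 h2
  exact ⟨h1, h2⟩

end Aux2
section Aux3
set_option linter.unusedSectionVars false
variable {Γ A : Type*} [Ring A] [StarRing A] [Algebra ℂ A] (a : Γ → A)

/-- single-site averaging operator -/
noncomputable def Ey (a : Γ → A) (y : Γ) (B : A) : A :=
  ((4:ℂ))⁻¹ • ∑ j : Fin 4, star (uFactor a j y) * B * uFactor a j y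

lemma Ey_eq (y : Γ) (B : A) :
    Ey a y B = (2:ℂ)⁻¹ • ((star (a y) * a y) * B * (star (a y) * a y)
      + (1 - star (a y) * a y) * B * (1 - star (a y) * a y)
      + star (a y) * B * a y + a y * B * star (a y)) := by
  have key : ∑ j : Fin 4, star (uFactor a j y) * B * uFactor a j y
      = (2:ℂ) • ((star (a y) * a y) * B * (star (a y) * a y)
        + (1 - star (a y) * a y) * B * (1 - star (a y) * a y)
        + star (a y) * B * a y + a y * B * star (a y)) := by
    rw [Fin.sum_univ_four, two_smul]
    simp only [uFactor, star_add, star_sub, star_mul, star_star, star_one, star_ofNat]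
    noncomm_ring
  rw [Ey, key, smul_smul]
  norm_num

lemma comm_pair {σ α M : A} {e : ℂ} (he : e * e = 1)
    (h1 : α * M = e • (M * α)) (h2 : σ * M = e • (M * σ)) :
    (σ * α) * M = M * (σ * α) := by
  calc (σ*α)*M = σ*(α*M) := mul_assoc _ _ _
    _ = e • ((σ*M)*α) := by rw [h1, mul_smul_comm, mul_assoc]
    _ = (e*e) • (M*(σ*α)) := by rw [h2, smul_mul_assoc, smul_smul, mul_assoc]
    _ = M * (σ*α) := by rw [he, one_smul]

lemma swap_mid {s t M1 F M2 : A} {e1 e2 : ℂ}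
    (h1 : s * M1 = e1 • (M1 * s)) (h2 : M2 * t = e2 • (t * M2)) :
    s * (M1 * (F * M2)) * t = (e1 * e2) • (M1 * (s * F * t * M2)) := by
  calc s * (M1 * (F * M2)) * t = (s * M1) * (F * (M2 * t)) := by noncomm_ring
    _ = (e1 • (M1*s)) * (F * (e2 • (t * M2))) := by rw [h1, h2]
    _ = (e1 * e2) • (M1 * (s * F * t * M2)) := by
        rw [mul_smul_comm, mul_smul_comm, smul_mul_assoc, smul_smul, mul_comm e2 e1]
        congr 1
        noncomm_ring

lemma Ey_monomial (h : IsCAR a) (y : Γ) (l1 l2 : List Γ) (hy1 : y ∉ l1) (hy2 : y ∉ l2)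
    (k : Γ → Fin 4) (he : Even (carOddCount (l1 ++ y :: l2) k)) :
    Ey a y (carMonomial a (l1 ++ y :: l2) k)
      = (if k y = 0 then (1:ℂ) else if k y = 3 then (2:ℂ)⁻¹ else 0)
          • carMonomial a (l1 ++ l2) k := by
  classical
  set σ := star (a y) with hσdef
  set α := a y with hαdef
  have hαα : α * α = 0 := aa_zero a h y
  have hσσ : σ * σ = 0 := ss_zero a h y
  have hασ : α * σ = 1 - σ * α := eq_sub_of_add_eq (sa_one a h y)
  have hpα : (σ * α) * α = 0 := by rw [mul_assoc, hαα, mul_zero]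
  have hσp : σ * (σ * α) = 0 := by rw [← mul_assoc, hσσ, zero_mul]
  have hαp : α * (σ * α) = α := by
    rw [← mul_assoc, hασ, sub_mul, one_mul, hpα, sub_zero]
  have hpσ : (σ * α) * σ = σ := by
    rw [mul_assoc, hασ, mul_sub, mul_one, hσp, sub_zero]
  have hp2 : (σ * α) * (σ * α) = σ * α := by rw [mul_assoc σ α _, hαp]
  -- monomial pieces
  rw [carMonomial_append, carMonomial_cons, carMonomial_append]
  set M1 := carMonomial a l1 k with hM1
  set M2 := carMonomial a l2 k with hM2
  set F := carFactor a (k y) y with hFdef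
  set c1 := carOddCount l1 k with hc1
  set c2 := carOddCount l2 k with hc2
  obtain ⟨hα1, hσ1⟩ := mono_comm a h y l1 hy1 k
  obtain ⟨hα2, hσ2⟩ := mono_comm a h y l2 hy2 k
  rw [← hM1, ← hc1] at hα1 hσ1
  rw [← hM2, ← hc2] at hα2 hσ2
  have hsq : ∀ c : ℕ, ((-1:ℂ) ^ c) * ((-1:ℂ) ^ c) = 1 := by
    intro c; rw [← pow_add]; exact Even.neg_one_pow ⟨c, rfl⟩
  have hM2α : M2 * α = ((-1:ℂ) ^ c2) • (α * M2) := by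
    rw [hα2, smul_smul, hsq, one_smul]
  have hM2σ : M2 * σ = ((-1:ℂ) ^ c2) • (σ * M2) := by
    rw [hσ2, smul_smul, hsq, one_smul]
  -- commutation of p = σ*α with M1, M2
  have hpM1 : (σ * α) * M1 = M1 * (σ * α) := comm_pair (hsq c1) hα1 hσ1
  have hpM2 : (σ * α) * M2 = M2 * (σ * α) := comm_pair (hsq c2) hα2 hσ2
  have hqM1 : (1 - σ * α) * M1 = M1 * (1 - σ * α) := by
    rw [sub_mul, mul_sub, one_mul, mul_one, hpM1]
  have hqM2 : (1 - σ * α) * M2 = M2 * (1 - σ * α) := by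
    rw [sub_mul, mul_sub, one_mul, mul_one, hpM2]
  have one1 : ∀ u M : A, u * M = M * u → u * M = (1:ℂ) • (M * u) := by
    intro u M hh; rw [one_smul]; exact hh
  have one2 : ∀ u M : A, u * M = M * u → M * u = (1:ℂ) • (u * M) := by
    intro u M hh; rw [one_smul]; exact hh.symm
  rw [Ey_eq, ← hσdef, ← hαdef]
  have T1 := swap_mid (F := F) (one1 _ _ hpM1) (one2 _ _ hpM2)
  have T2 := swap_mid (F := F) (one1 _ _ hqM1) (one2 _ _ hqM2)
  have T3 := swap_mid (F := F) hσ1 hM2α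
  have T4 := swap_mid (F := F) hα1 hM2σ
  rw [T1, T2, T3, T4, one_mul, one_smul, one_smul]
  -- evenness gives sign 1 when k y ∈ {0,3}
  have hcnt : carOddCount (l1 ++ y :: l2) k
      = c1 + ((if (k y = 1 ∨ k y = 2) then 1 else 0) + c2) := by
    rw [carOddCount_append, carOddCount_cons]
  simp only [← hαdef, ← hσdef]
  have hq2 : (1 - σ * α) * (1 - σ * α) = 1 - σ * α := by
    rw [sub_mul, one_mul, mul_sub, mul_one, hp2]; abel
  have hqp : (1 - σ * α) * (σ * α) = 0 := by rw [sub_mul, one_mul, hp2, sub_self]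
  have hqα : (1 - σ * α) * α = α := by rw [sub_mul, one_mul, hpα, sub_zero]
  have hαq : α * (1 - σ * α) = 0 := by rw [mul_sub, mul_one, hαp, sub_self]
  have hqσ : (1 - σ * α) * σ = 0 := by rw [sub_mul, one_mul, hpσ, sub_self]
  have hpq : M1 * ((σ * α) * M2) + M1 * ((1 - σ * α) * M2) = M1 * M2 := by
    rw [← mul_add, ← add_mul]
    norm_num
  rcases fin4_cases (k y) with hk | hk | hk | hk
  · -- k y = 0
    have hev : Even (c1 + c2) := by
      rw [hcnt, hk] at he
      simpa using he
    have hsign : ((-1:ℂ) ^ c1) * ((-1:ℂ) ^ c2) = 1 := by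
      rw [← pow_add]; exact hev.neg_one_pow
    simp only [hFdef, hk, carFactor, mul_one, hsign, one_smul, hp2, hq2, hασ]
    rw [if_pos trivial, one_smul, ← hpq]
    module
  · -- k y = 1
    simp only [hFdef, hk, carFactor, ← hαdef, hpα, hqα, hαq, hαα, zero_mul, mul_zero,
      smul_zero, add_zero, zero_add]
    simp
  · -- k y = 2
    simp only [hFdef, hk, carFactor, ← hαdef, ← hσdef, hpσ, hσp, hqσ, hσσ, hασ, zero_mul,
      mul_zero, smul_zero, add_zero, zero_add]
    simp
  · -- k y = 3
    have hev : Even (c1 + c2) := by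
      rw [hcnt, hk] at he
      simpa using he
    have hsign : ((-1:ℂ) ^ c1) * ((-1:ℂ) ^ c2) = 1 := by
      rw [← pow_add]; exact hev.neg_one_pow
    simp only [hFdef, hk, carFactor, ← hαdef, ← hσdef, hsign, one_smul]
    rw [show σ * α * (σ * α) * (σ * α) = σ * α by rw [hp2, hp2],
      show (1 - σ * α) * (σ * α) * (1 - σ * α) = 0 by rw [hqp, zero_mul],
      show σ * (σ * α) * α = 0 by rw [hσp, zero_mul],
      show α * (σ * α) * σ = 1 - σ * α by rw [hαp, hασ]]
    simp only [zero_mul, mul_zero]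
    rw [if_neg (show ¬((3:Fin 4) = 0) by decide), if_pos trivial, ← hpq]
    module

end Aux3
section Aux4
set_option linter.unusedSectionVars false
variable {Γ A : Type*} [Ring A] [StarRing A] [Algebra ℂ A] (a : Γ → A)

lemma condExp_nil (B : A) : condExp a [] B = B := by
  simp [condExp, uProd]

lemma uProd_cons (y : Γ) (t : List Γ) (j : Fin 4) (β : Fin t.length → Fin 4) :
    uProd a (y :: t) (Fin.cons j β) = uFactor a j y * uProd a t β := by
  simp [uProd, List.ofFn_succ]

lemma condExp_cons (y : Γ) (t : List Γ) (B : A) :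
    condExp a (y :: t) B = condExp a t (Ey a y B) := by
  rw [condExp, condExp, Ey]
  have hsum : ∑ α : Fin (y :: t).length → Fin 4, star (uProd a (y :: t) α) * B * uProd a (y :: t) α
      = ∑ β : Fin t.length → Fin 4, ∑ j : Fin 4,
          star (uProd a t β) * (star (uFactor a j y) * B * uFactor a j y) * uProd a t β := by
    show (∑ α : Fin (t.length + 1) → Fin 4,
      star (uProd a (y :: t) α) * B * uProd a (y :: t) α) = _
    rw [← Equiv.sum_comp (Fin.consEquiv fun _ => Fin 4)
      (fun q => star (uProd a (y :: t) q) * B * uProd a (y :: t) q), Fintype.sum_prod_type,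
      Finset.sum_comm]
    refine Finset.sum_congr rfl fun β _ => Finset.sum_congr rfl fun j _ => ?_
    show star (uProd a (y :: t) (Fin.cons j β)) * B * uProd a (y :: t) (Fin.cons j β) = _
    rw [uProd_cons, star_mul]
    noncomm_ring
  rw [hsum]
  have hR : ∀ β : Fin t.length → Fin 4,
      star (uProd a t β) * (((4:ℂ))⁻¹ • ∑ j : Fin 4,
          star (uFactor a j y) * B * uFactor a j y) * uProd a t β
        = (4:ℂ)⁻¹ • ∑ j : Fin 4,
            star (uProd a t β) * (star (uFactor a j y) * B * uFactor a j y) * uProd a t β := by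
    intro β
    rw [mul_smul_comm, smul_mul_assoc, Finset.mul_sum, Finset.sum_mul]
  simp only [hR]
  rw [← Finset.smul_sum, smul_smul]
  congr 1
  rw [List.length_cons, pow_succ, mul_inv]

lemma Ey_add (y : Γ) (B C : A) : Ey a y (B + C) = Ey a y B + Ey a y C := by
  simp [Ey, mul_add, add_mul, Finset.sum_add_distrib, smul_add]

lemma Ey_smul (y : Γ) (c : ℂ) (B : A) : Ey a y (c • B) = c • Ey a y B := by
  simp only [Ey, mul_smul_comm, smul_mul_assoc, ← Finset.smul_sum, smul_smul]
  rw [mul_comm]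

lemma Ey_zero (y : Γ) : Ey a y (0 : A) = 0 := by
  simp [Ey]

lemma condExp_add (l : List Γ) (B C : A) :
    condExp a l (B + C) = condExp a l B + condExp a l C := by
  simp [condExp, mul_add, add_mul, Finset.sum_add_distrib, smul_add]

lemma condExp_smul (l : List Γ) (c : ℂ) (B : A) :
    condExp a l (c • B) = c • condExp a l B := by
  simp only [condExp, mul_smul_comm, smul_mul_assoc, ← Finset.smul_sum, smul_smul]
  rw [mul_comm]

lemma condExp_zero (l : List Γ) : condExp a l (0 : A) = 0 := by
  simp [condExp]

lemma uFactor_unitary (h : IsCAR a) (j : Fin 4) (x : Γ) :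
    star (uFactor a j x) * uFactor a j x = 1 := by
  have hαα := aa_zero a h x
  have hσσ := ss_zero a h x
  have hone := sa_one a h x
  rcases fin4_cases j with hj | hj | hj | hj <;> subst hj <;>
    simp only [uFactor, star_add, star_sub, star_mul, star_star, star_one, star_ofNat]
  · simp
  · rw [add_mul, mul_add, mul_add, hαα, hσσ]
    calc a x * star (a x) + 0 + (0 + star (a x) * a x)
        = a x * star (a x) + star (a x) * a x := by abel
      _ = 1 := hone
  · rw [sub_mul, mul_sub, mul_sub, hαα, hσσ]
    calc a x * star (a x) - 0 - (0 - star (a x) * a x)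
        = a x * star (a x) + star (a x) * a x := by abel
      _ = 1 := hone
  · have hp2 : (star (a x) * a x) * (star (a x) * a x) = star (a x) * a x := by
      have hασ : a x * star (a x) = 1 - star (a x) * a x := eq_sub_of_add_eq hone
      rw [mul_assoc, ← mul_assoc (a x), hασ, sub_mul, one_mul]
      simp only [mul_sub, mul_assoc, hαα, mul_zero, sub_zero]
    simp only [sub_mul, mul_sub, one_mul, mul_one, mul_two, two_mul, add_mul, mul_add, hp2]
    abel

end Aux4
section Aux5
set_option linter.unusedSectionVars false
variable {Γ A : Type*} [Ring A] [StarRing A] [Algebra ℂ A] (a : Γ → A)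

lemma list_conj_fixed (B : A) : ∀ L : List A, (∀ u ∈ L, star u * u = 1) →
    (∀ u ∈ L, Commute B u) → star L.prod * B * L.prod = B := by
  intro L
  induction L with
  | nil => simp
  | cons u t ih =>
    intro hu hc
    have h1 : star u * u = 1 := hu u (List.mem_cons_self (a := u) (l := t))
    have h2 : Commute B u := hc u (List.mem_cons_self (a := u) (l := t))
    rw [List.prod_cons, star_mul]
    calc star t.prod * star u * B * (u * t.prod)
        = star t.prod * (star u * (B * u)) * t.prod := by noncomm_ring
      _ = star t.prod * (star u * (u * B)) * t.prod := by rw [h2.eq]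
      _ = star t.prod * B * t.prod := by rw [← mul_assoc (star u), h1, one_mul]
      _ = B := ih (fun v hv => hu v (List.mem_cons_of_mem u hv))
          (fun v hv => hc v (List.mem_cons_of_mem u hv))

lemma commute_uFactor (B : A) (y : Γ) (h1 : Commute B (a y)) (h2 : Commute B (star (a y)))
    (j : Fin 4) : Commute B (uFactor a j y) := by
  rcases fin4_cases j with hj | hj | hj | hj <;> subst hj <;> simp only [uFactor]
  · exact Commute.one_right B
  · exact h2.add_right h1
  · exact h2.sub_right h1
  · exact (Commute.one_right B).sub_right (((Commute.ofNat_right B 2).mul_right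
      (h2.mul_right h1)))

lemma uFactor_mem_uProd (l : List Γ) (α : Fin l.length → Fin 4) (u : A)
    (hu : u ∈ List.ofFn fun i => uFactor a (α i) (l.get i)) :
    ∃ y ∈ l, ∃ j, u = uFactor a j y := by
  rw [List.mem_ofFn] at hu
  obtain ⟨i, hi⟩ := hu
  exact ⟨l.get i, l.get_mem i, α i, hi.symm⟩

lemma condExp_fixed (h : IsCAR a) (l : List Γ) (B : A)
    (hc : ∀ y ∈ l, Commute B (a y) ∧ Commute B (star (a y))) :
    condExp a l B = B := by
  have hterm : ∀ α : Fin l.length → Fin 4, star (uProd a l α) * B * uProd a l α = B := by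
    intro α
    apply list_conj_fixed B
    · intro u hu
      obtain ⟨y, _, j, rfl⟩ := uFactor_mem_uProd a l α u hu
      exact uFactor_unitary a h j y
    · intro u hu
      obtain ⟨y, hy, j, rfl⟩ := uFactor_mem_uProd a l α u hu
      exact commute_uFactor a B y (hc y hy).1 (hc y hy).2 j
  rw [condExp]
  simp only [hterm]
  rw [Finset.sum_const, Finset.card_univ]
  have hcard : Fintype.card (Fin l.length → Fin 4) = 4 ^ l.length := by
    simp [Fintype.card_fun]
  rw [hcard, ← Nat.cast_smul_eq_nsmul ℂ, smul_smul]
  have : ((4:ℂ) ^ l.length)⁻¹ * ((4 ^ l.length : ℕ) : ℂ) = 1 := by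
    push_cast
    rw [inv_mul_cancel₀ (pow_ne_zero _ (by norm_num))]
  rw [this, one_smul]

end Aux5
section Aux6
set_option linter.unusedSectionVars false
variable {Γ A : Type*} [Ring A] [StarRing A] [Algebra ℂ A] (a : Γ → A)

lemma Ey_mem (h : IsCAR a) {y : Γ} {Λ : Finset Γ} (hy : y ∈ Λ) :
    ∀ B ∈ carSpanEven a Λ, Ey a y B ∈ carSpanEven a (Λ.erase y) := by
  intro B hB
  induction hB using Submodule.span_induction with
  | mem m hm =>
    obtain ⟨l', k, hnd, hset, hev, rfl⟩ := hm
    have hyl : y ∈ l' := by rw [← List.mem_toFinset, hset]; exact hy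
    obtain ⟨l1, l2, rfl⟩ := List.append_of_mem hyl
    have hnd' := hnd
    rw [List.nodup_append] at hnd'
    obtain ⟨hnd1, hnd2c, hdisj⟩ := hnd'
    have hy1 : y ∉ l1 := fun hh => hdisj y hh y List.mem_cons_self rfl
    have hy2 : y ∉ l2 := (List.nodup_cons.mp hnd2c).1
    have hnd12 : (l1 ++ l2).Nodup := by
      rw [List.nodup_append]
      exact ⟨hnd1, (List.nodup_cons.mp hnd2c).2,
        fun z hz1 w hw2 => hdisj z hz1 w (List.mem_cons_of_mem y hw2)⟩
    have hsetE : (l1 ++ l2).toFinset = Λ.erase y := by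
      rw [← hset]
      ext z
      simp only [List.toFinset_append, Finset.mem_union, List.mem_toFinset,
        Finset.mem_erase, List.toFinset_cons, Finset.mem_insert]
      constructor
      · rintro (hz | hz)
        · exact ⟨fun hzy => hy1 (hzy ▸ hz), Or.inl hz⟩
        · exact ⟨fun hzy => hy2 (hzy ▸ hz), Or.inr (Or.inr hz)⟩
      · rintro ⟨hzy, hz | hz⟩
        · exact Or.inl hz
        · rcases hz with hz | hz
          · exact absurd hz hzy
          · exact Or.inr hz
    rw [Ey_monomial a h y l1 l2 hy1 hy2 k hev]
    have hcnt : carOddCount (l1 ++ y :: l2) k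
        = carOddCount l1 k + ((if (k y = 1 ∨ k y = 2) then 1 else 0) + carOddCount l2 k) := by
      rw [carOddCount_append, carOddCount_cons]
    rcases fin4_cases (k y) with hk | hk | hk | hk
    · have hev' : Even (carOddCount (l1 ++ l2) k) := by
        rw [carOddCount_append]
        rw [hcnt, hk] at hev
        simpa using hev
      rw [hk]
      refine Submodule.smul_mem _ _ (Submodule.subset_span ?_)
      exact ⟨l1 ++ l2, k, hnd12, hsetE, hev', rfl⟩
    · rw [hk]; simp
    · rw [hk]; simp
    · have hev' : Even (carOddCount (l1 ++ l2) k) := by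
        rw [carOddCount_append]
        rw [hcnt, hk] at hev
        simpa using hev
      rw [hk]
      refine Submodule.smul_mem _ _ (Submodule.subset_span ?_)
      exact ⟨l1 ++ l2, k, hnd12, hsetE, hev', rfl⟩
  | zero => rw [Ey_zero]; exact Submodule.zero_mem _
  | add u v _ _ hu hv => rw [Ey_add]; exact Submodule.add_mem _ hu hv
  | smul c u _ hu => rw [Ey_smul]; exact Submodule.smul_mem _ _ hu

lemma condExp_mem_sdiff (h : IsCAR a) :
    ∀ (l : List Γ) (Λ : Finset Γ), l.Nodup → (∀ y ∈ l, y ∈ Λ) →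
      ∀ B ∈ carSpanEven a Λ, condExp a l B ∈ carSpanEven a (Λ \ l.toFinset) := by
  intro l
  induction l with
  | nil =>
    intro Λ _ _ B hB
    rw [condExp_nil]
    simpa using hB
  | cons y t ih =>
    intro Λ hnd hsub B hB
    rw [condExp_cons]
    have hyt : y ∉ t := (List.nodup_cons.mp hnd).1
    have h1 : Ey a y B ∈ carSpanEven a (Λ.erase y) :=
      Ey_mem a h (hsub y (List.mem_cons_self (a := y) (l := t))) B hB
    have h2 := ih (Λ.erase y) (List.nodup_cons.mp hnd).2
      (fun z hz => Finset.mem_erase.mpr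
        ⟨fun hzy => hyt (hzy ▸ hz), hsub z (List.mem_cons_of_mem y hz)⟩)
      (Ey a y B) h1
    have hfin : Λ.erase y \ t.toFinset = Λ \ (y :: t).toFinset := by
      rw [List.toFinset_cons, Finset.erase_eq, Finset.insert_eq, sdiff_sdiff]; rfl
    rwa [hfin] at h2

lemma carSpanEven_subset (X Λ : Finset Γ) (hXΛ : X ⊆ Λ) (l : List Γ) (hl : l.Nodup)
    (hlset : l.toFinset = Λ \ X) :
    carSpanEven a X ≤ carSpanEven a Λ := by
  apply Submodule.span_le.mpr
  rintro m ⟨l', k, hnd, hset, hev, rfl⟩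
  apply Submodule.subset_span
  refine ⟨l' ++ l, fun x => if x ∈ X then k x else 0, ?_, ?_, ?_, ?_⟩
  · rw [List.nodup_append]
    refine ⟨hnd, hl, fun z hz1 w hz2 hzw => ?_⟩
    subst hzw
    have hzX : z ∈ X := by rw [← hset]; exact List.mem_toFinset.mpr hz1
    have : z ∈ Λ \ X := by rw [← hlset]; exact List.mem_toFinset.mpr hz2
    exact (Finset.mem_sdiff.mp this).2 hzX
  · rw [List.toFinset_append, hset, hlset, Finset.union_sdiff_of_subset hXΛ]
  · rw [carOddCount_append]
    have h2 : carOddCount l (fun x => if x ∈ X then k x else 0) = 0 := by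
      rw [carOddCount, List.countP_eq_zero]
      intro z hz
      have : z ∉ X := by
        have : z ∈ Λ \ X := by rw [← hlset]; exact List.mem_toFinset.mpr hz
        exact (Finset.mem_sdiff.mp this).2
      simp [this]
    have h1 : carOddCount l' (fun x => if x ∈ X then k x else 0) = carOddCount l' k := by
      rw [carOddCount, carOddCount]
      apply List.countP_congr
      intro z hz
      have : z ∈ X := by rw [← hset]; exact List.mem_toFinset.mpr hz
      simp [this]
    rw [h1, h2, add_zero]
    exact hev
  · rw [carMonomial_append]
    have h2 : carMonomial a l (fun x => if x ∈ X then k x else 0) = 1 := by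
      rw [carMonomial]
      apply List.prod_eq_one
      intro z hz
      rw [List.mem_map] at hz
      obtain ⟨w, hw, rfl⟩ := hz
      have : w ∉ X := by
        have : w ∈ Λ \ X := by rw [← hlset]; exact List.mem_toFinset.mpr hw
        exact (Finset.mem_sdiff.mp this).2
      simp [this, carFactor]
    have h1 : carMonomial a l' (fun x => if x ∈ X then k x else 0) = carMonomial a l' k := by
      rw [carMonomial, carMonomial]
      congr 1
      apply List.map_congr_left
      intro z hz
      have : z ∈ X := by rw [← hset]; exact List.mem_toFinset.mpr hz
      simp [this]
    rw [h1, h2, mul_one]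

end Aux6
/-- `𝔼_X^Λ` maps the even subalgebra `𝔄_Λ⁺` onto the even local subalgebra
`𝔄_X⁺`: `𝔼_X^Λ(B) ∈ 𝔄_X⁺` for `B ∈ 𝔄_Λ⁺`, `𝔼_X^Λ(B) = B` for `B ∈ 𝔄_X⁺`, and hence
`𝔼_X^Λ(𝔄_Λ⁺) = 𝔄_X⁺`. -/
theorem condExp_maps_even_onto_even
    {Γ A : Type*} [DecidableEq Γ]
    [NormedRing A] [StarRing A] [CStarRing A] [NormedAlgebra ℂ A]
    (a : Γ → A) (hCAR : IsCAR a)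
    (X Λ : Finset Γ) (hXΛ : X ⊆ Λ)
    (l : List Γ) (hl : l.Nodup) (hlset : l.toFinset = Λ \ X) :
    (∀ B ∈ carSpanEven a Λ, condExp a l B ∈ carSpanEven a X) ∧
    (∀ B ∈ carSpanEven a X, condExp a l B = B) ∧
    condExp a l '' (carSpanEven a Λ : Set A) = (carSpanEven a X : Set A) := by
  have hcl := Subsingleton.elim (α := DecidableEq Γ) ‹DecidableEq Γ›
    (fun a b => Classical.propDecidable (a = b))
  rw [hcl] at hlset
  have hset3 : ∀ z, z ∈ l ↔ z ∈ Λ ∧ z ∉ X := by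
    intro z
    have h2 := congrArg (fun s : Finset Γ => z ∈ s) hlset
    simp only [eq_iff_iff, List.mem_toFinset, Finset.mem_sdiff] at h2
    exact h2
  have hsub : ∀ y ∈ l, y ∈ Λ := fun y hy => ((hset3 y).1 hy).1
  have hfix : ∀ B ∈ carSpanEven a X, condExp a l B = B := by
    intro B hB
    induction hB using Submodule.span_induction with
    | mem m hm =>
      obtain ⟨l', k, hnd, hset, hev, rfl⟩ := hm
      apply condExp_fixed a hCAR
      intro y hy
      have hyX : y ∉ l' := by
        intro hc
        have : y ∈ X := by
          rw [← hset]
          simp only [List.mem_toFinset]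
          exact hc
        exact ((hset3 y).1 hy).2 this
      obtain ⟨h1, h2⟩ := mono_comm_even a hCAR y l' hyX k hev
      exact ⟨h1.symm, h2.symm⟩
    | zero => rw [condExp_zero]
    | add u v _ _ hu hv => rw [condExp_add, hu, hv]
    | smul c u _ hu => rw [condExp_smul, hu]
  have hmaps : ∀ B ∈ carSpanEven a Λ, condExp a l B ∈ carSpanEven a X := by
    intro B hB
    have hmem := condExp_mem_sdiff a hCAR l Λ hl hsub B hB
    convert hmem using 2
    ext z
    simp only [Finset.mem_sdiff, List.mem_toFinset]
    constructor
    · intro hzX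
      exact ⟨hXΛ hzX, fun hzl => ((hset3 z).1 hzl).2 hzX⟩
    · rintro ⟨hzΛ, hzl⟩
      by_cases hzX : z ∈ X
      · exact hzX
      · exact absurd ((hset3 z).mpr ⟨hzΛ, hzX⟩) hzl
  refine ⟨hmaps, hfix, ?_⟩
  ext b
  constructor
  · rintro ⟨B, hB, rfl⟩
    exact hmaps B hB
  · intro hb
    exact ⟨b, carSpanEven_subset a X Λ hXΛ l hl
      (by ext z
          simp only [List.mem_toFinset, Finset.mem_sdiff]
          exact hset3 z) hb, hfix b hb⟩
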